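/- Let p, q ≥ 1, let Cl_{p+q} be the real Clifford algebra of Q(v) = -‖v‖² on EuclideanSpace ℝ (Fin (p+q)) with embedding ι, and let s be a unit vector of ℝ^q, regarded as a vector s̃ of ℝ^{p+q} supported in the last q coordinates. Let N ∈ ℕ and let C_j, D_j : ℝ → ℝ (j ∈ ℕ) be differentiable functions with C_j = D_j = 0 for all j ≥ N. Set β_j = -j for j even and β_j = -(j + p - 1) for j odd, and for x ∈ ℝ^p write x̃ for x regarded as a vector of ℝ^{p+q} supported in the first p coordinates. Define F(x,y) = Σ_{j=0}^{N} (ι(x̃))^j * ( C_j(⟨y,s⟩) • 1 + D_j(⟨y,s⟩) • ι(s̃) ). Then F is monogenic on all of ℝ^{p+q} (i.e. (∂_x + ∂_y)F = 0 everywhere) if and only if for all j ∈ ℕ and all t ∈ ℝ: β_{j+1} C_{j+1}(t) = (-1)^j D_j'(t) and β_{j+1} D_{j+1}(t) = -(-1)^j C_j'(t). -/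

import Mathlib

open MeasureTheory Metric
open scoped RealInnerProductSpace

noncomputable section

/-- Weak (Pettis-style) directional derivative: `f` has derivative `d` at `a` in direction `v`
iff every real-linear functional of `f` along the line `a + t • v` has derivative `ℓ d` at `t = 0`.
For finite-dimensional codomains this coincides with the usual directional derivative. -/
def HasPDeriv {E A : Type*} [NormedAddCommGroup E] [NormedSpace ℝ E]
    [AddCommGroup A] [Module ℝ A] (f : E → A) (a v : E) (d : A) : Prop :=
  ∀ ℓ : A →ₗ[ℝ] ℝ, HasDerivAt (fun t : ℝ => ℓ (f (a + t • v))) (ℓ d) 0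

/-- The Dirac derivative of `f` at `a` equals `D`: the partial derivatives of `f` at `a`
in the standard coordinate directions exist and `∑ⱼ ι(eⱼ) * ∂ⱼf(a) = D`. -/
def DiracDerivEq {m : ℕ} {Q : QuadraticForm ℝ (EuclideanSpace ℝ (Fin m))}
    (f : EuclideanSpace ℝ (Fin m) → CliffordAlgebra Q)
    (a : EuclideanSpace ℝ (Fin m)) (D : CliffordAlgebra Q) : Prop :=
  ∃ d : Fin m → CliffordAlgebra Q,
    (∀ j, HasPDeriv f a (EuclideanSpace.single j 1) (d j)) ∧
    ∑ j, CliffordAlgebra.ι Q (EuclideanSpace.single j 1) * d j = D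

variable (p q : ℕ) in
/-- The first `p` coordinates of a point of `ℝ^{p+q}`. -/
def xpart (z : EuclideanSpace ℝ (Fin (p + q))) : EuclideanSpace ℝ (Fin p) :=
  (WithLp.equiv 2 (Fin p → ℝ)).symm fun i => z (Fin.castAdd q i)

variable (p q : ℕ) in
/-- The last `q` coordinates of a point of `ℝ^{p+q}`. -/
def ypart (z : EuclideanSpace ℝ (Fin (p + q))) : EuclideanSpace ℝ (Fin q) :=
  (WithLp.equiv 2 (Fin q → ℝ)).symm fun i => z (Fin.natAdd p i)

variable (p q : ℕ) in
/-- A vector of `ℝ^p` regarded as a vector of `ℝ^{p+q}` supported in the first `p` coordinates. -/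
def embX (x : EuclideanSpace ℝ (Fin p)) : EuclideanSpace ℝ (Fin (p + q)) :=
  (WithLp.equiv 2 (Fin (p + q) → ℝ)).symm (Fin.addCases (fun i => x i) fun _ => 0)

variable (p q : ℕ) in
/-- A vector of `ℝ^q` regarded as a vector of `ℝ^{p+q}` supported in the last `q` coordinates. -/
def embY (y : EuclideanSpace ℝ (Fin q)) : EuclideanSpace ℝ (Fin (p + q)) :=
  (WithLp.equiv 2 (Fin (p + q) → ℝ)).symm (Fin.addCases (fun _ => 0) fun i => y i)

variable (p : ℕ) in
/-- `β_j = -j` for `j` even and `β_j = -(j + p - 1)` for `j` odd. -/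
def βcoef (j : ℕ) : ℝ := if Even j then -(j : ℝ) else -((j : ℝ) + p - 1)




lemma natAdd_ne_castAdd {p q : ℕ} (k : Fin q) (i : Fin p) :
    Fin.natAdd p k ≠ Fin.castAdd q i := by
  intro h
  have := congrArg Fin.val h
  simp only [Fin.coe_natAdd, Fin.coe_castAdd] at this
  omega

lemma natAdd_inj {p q : ℕ} {a b : Fin q} :
    Fin.natAdd p a = Fin.natAdd p b ↔ a = b := by
  constructor
  · intro h
    have := congrArg Fin.val h
    simp only [Fin.coe_natAdd] at this
    exact Fin.val_injective (by omega : a.val = b.val)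
  · intro h; rw [h]

variable {p q : ℕ}


lemma embX_castAdd (x : EuclideanSpace ℝ (Fin p)) (i : Fin p) :
    embX p q x (Fin.castAdd q i) = x i := by
  simp [embX, PiLp.toLp_apply]
lemma embX_natAdd (x : EuclideanSpace ℝ (Fin p)) (i : Fin q) :
    embX p q x (Fin.natAdd p i) = 0 := by
  simp [embX, PiLp.toLp_apply]
lemma embY_castAdd (y : EuclideanSpace ℝ (Fin q)) (i : Fin p) :
    embY p q y (Fin.castAdd q i) = 0 := by
  simp [embY, PiLp.toLp_apply]
lemma embY_natAdd (y : EuclideanSpace ℝ (Fin q)) (i : Fin q) :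
    embY p q y (Fin.natAdd p i) = y i := by
  simp [embY, PiLp.toLp_apply]

lemma xpart_apply (z : EuclideanSpace ℝ (Fin (p+q))) (i : Fin p) :
    xpart p q z i = z (Fin.castAdd q i) := rfl
lemma ypart_apply (z : EuclideanSpace ℝ (Fin (p+q))) (i : Fin q) :
    ypart p q z i = z (Fin.natAdd p i) := rfl

lemma embX_single (i : Fin p) :
    embX p q (EuclideanSpace.single i 1) = EuclideanSpace.single (Fin.castAdd q i) 1 := by
  ext k
  induction k using Fin.addCases with
  | left k => simp [embX_castAdd, EuclideanSpace.single_apply, Fin.castAdd_inj]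
  | right k =>
    simp [embX_natAdd, EuclideanSpace.single_apply, natAdd_ne_castAdd]

lemma embY_single (i : Fin q) :
    embY p q (EuclideanSpace.single i 1) = EuclideanSpace.single (Fin.natAdd p i) 1 := by
  ext k
  induction k using Fin.addCases with
  | left k =>
    simp [embY_castAdd, EuclideanSpace.single_apply, (natAdd_ne_castAdd _ _).symm]
  | right k => simp [embY_natAdd, EuclideanSpace.single_apply, natAdd_inj]

lemma inner_embX_embY (x : EuclideanSpace ℝ (Fin p)) (y : EuclideanSpace ℝ (Fin q)) :
    ⟪embX p q x, embY p q y⟫ = 0 := by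
  have : ∀ k, embX p q x k * embY p q y k = 0 := by
    intro k
    induction k using Fin.addCases with
    | left k => simp [embY_castAdd]
    | right k => simp [embX_natAdd]
  simp [PiLp.inner_apply, RCLike.inner_apply, this]
  exact Finset.sum_eq_zero fun k _ => by rw [mul_comm]; exact this k

lemma inner_embX (x x' : EuclideanSpace ℝ (Fin p)) :
    ⟪embX p q x, embX p q x'⟫ = ⟪x, x'⟫ := by
  simp only [PiLp.inner_apply, RCLike.inner_apply, conj_trivial]
  rw [Fin.sum_univ_add]
  simp [embX_castAdd, embX_natAdd]

lemma inner_embY (y y' : EuclideanSpace ℝ (Fin q)) :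
    ⟪embY p q y, embY p q y'⟫ = ⟪y, y'⟫ := by
  simp only [PiLp.inner_apply, RCLike.inner_apply, conj_trivial]
  rw [Fin.sum_univ_add]
  simp [embY_castAdd, embY_natAdd]

lemma norm_embX (x : EuclideanSpace ℝ (Fin p)) : ‖embX p q x‖ = ‖x‖ := by
  rw [← Real.sqrt_sq (norm_nonneg x), ← real_inner_self_eq_norm_sq, ← inner_embX x x,
    real_inner_self_eq_norm_sq, Real.sqrt_sq (norm_nonneg _)]

lemma norm_embY (y : EuclideanSpace ℝ (Fin q)) : ‖embY p q y‖ = ‖y‖ := by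
  rw [← Real.sqrt_sq (norm_nonneg y), ← real_inner_self_eq_norm_sq, ← inner_embY y y,
    real_inner_self_eq_norm_sq, Real.sqrt_sq (norm_nonneg _)]

lemma embX_add (a b : EuclideanSpace ℝ (Fin p)) :
    embX p q (a + b) = embX p q a + embX p q b := by
  ext k
  induction k using Fin.addCases with
  | left k => simp [embX_castAdd]
  | right k => simp [embX_natAdd]

lemma embX_smul (c : ℝ) (a : EuclideanSpace ℝ (Fin p)) :
    embX p q (c • a) = c • embX p q a := by
  ext k
  induction k using Fin.addCases with
  | left k => simp [embX_castAdd]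
  | right k => simp [embX_natAdd]

lemma embY_add (a b : EuclideanSpace ℝ (Fin q)) :
    embY p q (a + b) = embY p q a + embY p q b := by
  ext k
  induction k using Fin.addCases with
  | left k => simp [embY_castAdd]
  | right k => simp [embY_natAdd]

lemma embY_smul (c : ℝ) (a : EuclideanSpace ℝ (Fin q)) :
    embY p q (c • a) = c • embY p q a := by
  ext k
  induction k using Fin.addCases with
  | left k => simp [embY_castAdd]
  | right k => simp [embY_natAdd]

lemma xpart_add_smul (a : EuclideanSpace ℝ (Fin (p+q))) (τ : ℝ) (i : Fin p) :
    xpart p q (a + τ • EuclideanSpace.single (Fin.castAdd q i) 1)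
      = xpart p q a + τ • EuclideanSpace.single i 1 := by
  ext k
  simp [xpart_apply, EuclideanSpace.single_apply, Fin.castAdd_inj]

lemma ypart_add_smul_cast (a : EuclideanSpace ℝ (Fin (p+q))) (τ : ℝ) (i : Fin p) :
    ypart p q (a + τ • EuclideanSpace.single (Fin.castAdd q i) 1) = ypart p q a := by
  ext k
  have : (Fin.natAdd p k : Fin (p+q)) ≠ Fin.castAdd q i := by
    exact natAdd_ne_castAdd k i
  simp [ypart_apply, EuclideanSpace.single_apply, this]

lemma xpart_add_smul_nat (a : EuclideanSpace ℝ (Fin (p+q))) (τ : ℝ) (i : Fin q) :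
    xpart p q (a + τ • EuclideanSpace.single (Fin.natAdd p i) 1) = xpart p q a := by
  ext k
  have : (Fin.castAdd q k : Fin (p+q)) ≠ Fin.natAdd p i := by
    exact fun h => natAdd_ne_castAdd i k h.symm
  simp [xpart_apply, EuclideanSpace.single_apply, this]

lemma ypart_add_smul_nat (a : EuclideanSpace ℝ (Fin (p+q))) (τ : ℝ) (i : Fin q) :
    ypart p q (a + τ • EuclideanSpace.single (Fin.natAdd p i) 1)
      = ypart p q a + τ • EuclideanSpace.single i 1 := by
  ext k
  simp [ypart_apply, EuclideanSpace.single_apply, natAdd_inj]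

lemma xpart_emb (x : EuclideanSpace ℝ (Fin p)) (y : EuclideanSpace ℝ (Fin q)) :
    xpart p q (embX p q x + embY p q y) = x := by
  ext k; simp [xpart_apply, embX_castAdd, embY_castAdd]

lemma ypart_emb (x : EuclideanSpace ℝ (Fin p)) (y : EuclideanSpace ℝ (Fin q)) :
    ypart p q (embX p q x + embY p q y) = y := by
  ext k; simp [ypart_apply, embX_natAdd, embY_natAdd]

lemma euclid_decomp {m : ℕ} (x : EuclideanSpace ℝ (Fin m)) :
    x = ∑ k, x k • EuclideanSpace.single k (1:ℝ) := by
  ext i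
  rw [show ((∑ k, x k • EuclideanSpace.single k (1:ℝ)) i) = ∑ k, (x k • EuclideanSpace.single k (1:ℝ)) i from by rw [WithLp.ofLp_sum, Finset.sum_apply]]
  simp [EuclideanSpace.single_apply]
open Finset

section Alg
variable {A : Type*} [Ring A] [Algebra ℝ A]

/-- coefficients of the expansion of `(X + τ • E)^j` in powers of `τ`. -/
def ec (X E : A) : ℕ → ℕ → A
  | 0, 0 => 1
  | 0, _+1 => 0
  | j+1, 0 => X * ec X E j 0
  | j+1, k+1 => X * ec X E j (k+1) + E * ec X E j k

lemma ec_gt (X E : A) : ∀ j k, j < k → ec X E j k = 0 := by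
  intro j
  induction j with
  | zero => intro k hk; match k, hk with | (k+1), _ => simp [ec]
  | succ j ih =>
    intro k hk
    match k, hk with
    | (k+1), hk =>
      show X * ec X E j (k+1) + E * ec X E j k = 0
      rw [ih (k+1) (by omega), ih k (by omega), mul_zero, mul_zero, add_zero]

lemma ec_zero (X E : A) : ∀ j, ec X E j 0 = X ^ j := by
  intro j
  induction j with
  | zero => simp [ec]
  | succ j ih => show X * ec X E j 0 = _; rw [ih, pow_succ']

lemma ec_one (X E : A) : ∀ j, ec X E (j+1) 1 = ∑ r ∈ Finset.range (j+1), X^r * E * X^(j-r) := by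
  intro j
  induction j with
  | zero =>
    show X * ec X E 0 1 + E * ec X E 0 0 = _
    simp [ec]
  | succ j ih =>
    show X * ec X E (j+1) 1 + E * ec X E (j+1) 0 = _
    rw [ih, ec_zero, Finset.mul_sum]
    conv_rhs => rw [Finset.sum_range_succ' (fun r => X^r * E * X^(j+1-r)) (j+1)]
    congr 1
    · apply Finset.sum_congr rfl
      intro r _
      rw [← mul_assoc, ← mul_assoc, ← pow_succ']
      congr 2
      omega
    · simp

lemma ec_expand (X E : A) (τ : ℝ) :
    ∀ j, (X + τ • E)^j = ∑ k ∈ Finset.range (j+1), τ^k • ec X E j k := by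
  intro j
  induction j with
  | zero => simp [ec]
  | succ j ih =>
    rw [pow_succ', ih, add_mul, Finset.mul_sum, Finset.mul_sum]
    have h1 : ∀ k, X * (τ^k • ec X E j k) = τ^k • (X * ec X E j k) := fun k =>
      (mul_smul_comm _ _ _)
    have h2 : ∀ k, (τ • E) * (τ^k • ec X E j k) = τ^(k+1) • (E * ec X E j k) := by
      intro k
      rw [smul_mul_assoc, mul_smul_comm, smul_smul, ← pow_succ']
    simp only [h1, h2]
    rw [Finset.sum_range_succ' (fun k => τ^k • (X * ec X E j k)) j]
    have h3 : (∑ k ∈ range j, τ^(k+1) • (X * ec X E j (k+1)))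
        = ∑ k ∈ range (j+1), τ^(k+1) • (X * ec X E j (k+1)) := by
      rw [Finset.sum_range_succ, ec_gt X E j (j+1) (by omega), mul_zero, smul_zero, add_zero]
    rw [h3]
    rw [Finset.sum_range_succ' (fun k => τ^k • ec X E (j+1) k) (j+1)]
    have h4 : ∀ k, ec X E (j+1) (k+1) = X * ec X E j (k+1) + E * ec X E j k := fun k => rfl
    have h5 : ec X E (j+1) 0 = X * ec X E j 0 := rfl
    simp only [h4, h5, pow_zero, one_smul, smul_add, Finset.sum_add_distrib]
    abel

/-- `u * w = 0` for a unit `u` implies `w = 0`. -/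
lemma unit_mul_eq_zero {u w : A} (hu : IsUnit u) (h : u * w = 0) : w = 0 := by
  obtain ⟨v, rfl⟩ := hu
  calc w = ↑v⁻¹ * (↑v * w) := by rw [← mul_assoc, Units.inv_mul, one_mul]
  _ = 0 := by rw [h, mul_zero]

end Alg

lemma hasDerivAt_poly {n : ℕ} (b : ℕ → ℝ) (hn : 1 < n) :
    HasDerivAt (fun τ : ℝ => ∑ k ∈ Finset.range n, τ^k * b k) (b 1) 0 := by
  have h : ∀ k ∈ Finset.range n,
      HasDerivAt (fun τ : ℝ => τ^k * b k) ((k * 0^(k-1)) * b k) 0 := fun k _ =>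
    (hasDerivAt_pow k 0).mul_const _
  have := HasDerivAt.fun_sum h
  convert this using 1
  case e'_4 => rfl
  case e'_5 => rfl
  rw [Finset.sum_eq_single 1]
  · norm_num
  · intro k _ hk
    match k, hk with
    | 0, _ => norm_num
    | (m+2), _ => norm_num
  · intro h1; exact absurd (Finset.mem_range.2 hn) h1

lemma coeffs_zero {A : Type*} [AddCommGroup A] [Module ℝ A] {n : ℕ} (v : ℕ → A)
    (h : ∀ r : ℝ, ∑ k ∈ Finset.range n, r^k • v k = 0) : ∀ k, k < n → v k = 0 := by
  intro k hk
  rw [← Module.forall_dual_apply_eq_zero_iff ℝ]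
  intro ℓ
  set P : Polynomial ℝ := ∑ j ∈ Finset.range n, Polynomial.C (ℓ (v j)) * Polynomial.X ^ j with hP
  have hPz : P = 0 := by
    apply Polynomial.funext
    intro r
    have := congrArg ℓ (h r)
    simp only [map_sum, _root_.map_smul, map_zero] at this
    have hev : P.eval r = ∑ k ∈ Finset.range n, ℓ (v k) * r^k := by
      simp [hP, Polynomial.eval_finset_sum]
    rw [hev, Polynomial.eval_zero, ← this]
    exact Finset.sum_congr rfl fun k _ => mul_comm _ _
  have : P.coeff k = ℓ (v k) := by
    simp [hP, Polynomial.finset_sum_coeff, Polynomial.coeff_C_mul, Polynomial.coeff_X_pow,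
      Finset.sum_ite_eq' (Finset.range n), hk]
  rw [← this, hPz, Polynomial.coeff_zero]
section Cliff
open CliffordAlgebra Finset
variable {m : ℕ} {Q : QuadraticForm ℝ (EuclideanSpace ℝ (Fin m))}

lemma iota_sq (hQ : ∀ v, Q v = -‖v‖^2) (v : EuclideanSpace ℝ (Fin m)) :
    ι Q v * ι Q v = algebraMap ℝ _ (-‖v‖^2) := by
  rw [ι_sq_scalar, hQ]

lemma iota_sq_neg_one (hQ : ∀ v, Q v = -‖v‖^2) (v : EuclideanSpace ℝ (Fin m)) (hv : ‖v‖ = 1) :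
    ι Q v * ι Q v = -1 := by
  rw [iota_sq hQ, hv, one_pow, map_neg, map_one]

lemma iota_anticomm (hQ : ∀ v, Q v = -‖v‖^2) {u v : EuclideanSpace ℝ (Fin m)}
    (huv : ⟪u, v⟫ = 0) :
    ι Q u * ι Q v = -(ι Q v * ι Q u) := by
  have h := CliffordAlgebra.ι_mul_ι_add_swap (Q := Q) u v
  have hp : QuadraticMap.polar Q u v = 0 := by
    simp only [QuadraticMap.polar, hQ]
    have hn : ‖u + v‖^2 = ‖u‖^2 + 2*⟪u,v⟫ + ‖v‖^2 := norm_add_sq_real u v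
    rw [hn, huv]
    ring
  rw [hp, map_zero] at h
  exact eq_neg_of_add_eq_zero_left h

lemma iota_unit (hQ : ∀ v, Q v = -‖v‖^2) (v : EuclideanSpace ℝ (Fin m)) (hv : ‖v‖ = 1) :
    IsUnit (ι Q v) := by
  exact ⟨⟨ι Q v, -(ι Q v), by rw [mul_neg, iota_sq_neg_one hQ v hv, neg_neg],
    by rw [neg_mul, iota_sq_neg_one hQ v hv, neg_neg]⟩, rfl⟩

/-- anticommutation with powers -/
lemma anticomm_pow (hQ : ∀ v, Q v = -‖v‖^2) {u v : EuclideanSpace ℝ (Fin m)}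
    (huv : ⟪u, v⟫ = 0) (j : ℕ) :
    ι Q u * (ι Q v)^j = ((-1:ℝ)^j) • ((ι Q v)^j * ι Q u) := by
  induction j with
  | zero => simp
  | succ j ih =>
    rw [pow_succ', ← mul_assoc, iota_anticomm hQ huv, neg_mul, mul_assoc, ih]
    rw [mul_smul_comm, ← mul_assoc, ← pow_succ', ← neg_smul]
    congr 1
    rw [pow_succ (-1:ℝ) j]
    ring

end Cliff
section PQ
open CliffordAlgebra Finset

def κcoef (p : ℕ) (r : ℕ) : ℝ := if Even r then -(p:ℝ) else (p:ℝ) - 2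


lemma βsum (p : ℕ) (j : ℕ) : ∑ r ∈ Finset.range j, κcoef p r = βcoef p j := by
  induction j with
  | zero => simp [βcoef]
  | succ j ih =>
    rw [Finset.sum_range_succ, ih]
    rcases Nat.even_or_odd j with hj | hj
    · have hj1 : ¬ Even (j+1) := by simp [Nat.even_add_one, hj]
      simp only [βcoef, κcoef, hj, hj1, if_true, if_false, Nat.cast_add, Nat.cast_one]
      ring
    · have hj' : ¬ Even j := Nat.not_even_iff_odd.2 hj
      have hj1 : Even (j+1) := Nat.even_add_one.2 hj'
      simp only [βcoef, κcoef, hj', hj1, if_true, if_false, Nat.cast_add, Nat.cast_one]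
      ring

variable {p q : ℕ} {Q : QuadraticForm ℝ (EuclideanSpace ℝ (Fin (p + q)))}

lemma emb_single_norm (i : Fin p) : ‖embX p q (EuclideanSpace.single i 1)‖ = 1 := by
  rw [norm_embX]; simp

lemma embY_single_norm (i : Fin q) : ‖embY p q (EuclideanSpace.single i 1)‖ = 1 := by
  rw [norm_embY]; simp

lemma inner_single_single {n : ℕ} (i k : Fin n) (h : i ≠ k) :
    ⟪(EuclideanSpace.single i (1:ℝ) : EuclideanSpace ℝ (Fin n)), EuclideanSpace.single k 1⟫ = 0 := by
  rw [EuclideanSpace.inner_single_left]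
  simp [EuclideanSpace.single_apply, h]

/-- `embX` as a linear map. -/
def embXL (p q : ℕ) : EuclideanSpace ℝ (Fin p) →ₗ[ℝ] EuclideanSpace ℝ (Fin (p+q)) :=
  ⟨⟨embX p q, embX_add⟩, embX_smul⟩

/-- `embY` as a linear map. -/
def embYL (p q : ℕ) : EuclideanSpace ℝ (Fin q) →ₗ[ℝ] EuclideanSpace ℝ (Fin (p+q)) :=
  ⟨⟨embY p q, embY_add⟩, embY_smul⟩

/-- decomposition of `ι Q (embX x)` -/
lemma iota_embX_decomp (x : EuclideanSpace ℝ (Fin p)) :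
    ι Q (embX p q x) = ∑ k, x k • ι Q (embX p q (EuclideanSpace.single k 1)) := by
  have h : embX p q x = ∑ k, x k • embX p q (EuclideanSpace.single k 1) := by
    calc embX p q x = embXL p q x := rfl
    _ = embXL p q (∑ k, x k • EuclideanSpace.single k 1) := by rw [← euclid_decomp x]
    _ = ∑ k, x k • embX p q (EuclideanSpace.single k 1) := by
        rw [map_sum]; simp only [_root_.map_smul]; rfl
  rw [h, map_sum]
  simp only [_root_.map_smul]

lemma iota_embY_decomp (y : EuclideanSpace ℝ (Fin q)) :
    ι Q (embY p q y) = ∑ k, y k • ι Q (embY p q (EuclideanSpace.single k 1)) := by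
  have h : embY p q y = ∑ k, y k • embY p q (EuclideanSpace.single k 1) := by
    calc embY p q y = embYL p q y := rfl
    _ = embYL p q (∑ k, y k • EuclideanSpace.single k 1) := by rw [← euclid_decomp y]
    _ = ∑ k, y k • embY p q (EuclideanSpace.single k 1) := by
        rw [map_sum]; simp only [_root_.map_smul]; rfl
  rw [h, map_sum]
  simp only [_root_.map_smul]

end PQ
section PQ2
open CliffordAlgebra Finset
variable {p q : ℕ} {Q : QuadraticForm ℝ (EuclideanSpace ℝ (Fin (p + q)))}

lemma inner_embX_singles (i k : Fin p) (h : i ≠ k) :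
    ⟪embX p q (EuclideanSpace.single i 1), embX p q (EuclideanSpace.single k 1)⟫ = 0 := by
  rw [inner_embX]; exact inner_single_single i k h

lemma sum_E_conj_single (hQ : ∀ v, Q v = -‖v‖^2) (k : Fin p) :
    ∑ i : Fin p, ι Q (embX p q (EuclideanSpace.single i 1)) *
        ι Q (embX p q (EuclideanSpace.single k 1)) *
        ι Q (embX p q (EuclideanSpace.single i 1))
      = ((p:ℝ) - 2) • ι Q (embX p q (EuclideanSpace.single k 1)) := by
  set E : Fin p → CliffordAlgebra Q := fun i => ι Q (embX p q (EuclideanSpace.single i 1)) with hE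
  have hsq : ∀ i, E i * E i = -1 := fun i => iota_sq_neg_one hQ _ (emb_single_norm i)
  have hterm : ∀ i ∈ Finset.univ.erase k, E i * E k * E i = E k := by
    intro i hi
    have hik : i ≠ k := (Finset.mem_erase.1 hi).1
    rw [hE]
    rw [iota_anticomm hQ (inner_embX_singles i k hik), neg_mul, mul_assoc]
    rw [hsq i]
    rw [mul_neg_one, neg_neg]
  rw [← Finset.sum_erase_add _ _ (Finset.mem_univ k)]
  rw [Finset.sum_congr rfl hterm, Finset.sum_const]
  rw [show E k * E k * E k = -E k by rw [hsq k, neg_one_mul]]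
  rw [Finset.card_erase_of_mem (Finset.mem_univ k), Finset.card_univ, Fintype.card_fin]
  have hp : 0 < p := k.pos
  have hcast : ((p - 1 : ℕ) : ℝ) = (p : ℝ) - 1 := by
    rw [Nat.cast_sub hp, Nat.cast_one]
  rw [← Nat.cast_smul_eq_nsmul ℝ (p-1) (E k), hcast]
  module

lemma sum_E_pow_E (hQ : ∀ v, Q v = -‖v‖^2) (x : EuclideanSpace ℝ (Fin p)) (r : ℕ) :
    ∑ i : Fin p, ι Q (embX p q (EuclideanSpace.single i 1)) *
        (ι Q (embX p q x))^r * ι Q (embX p q (EuclideanSpace.single i 1))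
      = κcoef p r • (ι Q (embX p q x))^r := by
  set E : Fin p → CliffordAlgebra Q := fun i => ι Q (embX p q (EuclideanSpace.single i 1)) with hE
  set X : CliffordAlgebra Q := ι Q (embX p q x) with hX
  induction r using Nat.twoStepInduction with
  | zero =>
    simp only [pow_zero, mul_one]
    have : ∀ i : Fin p, E i * E i = -1 := fun i => iota_sq_neg_one hQ _ (emb_single_norm i)
    rw [Finset.sum_congr rfl (fun i _ => this i), Finset.sum_const, Finset.card_univ,
      Fintype.card_fin, κcoef]
    simp only [Even.zero, if_true]
    rw [← Nat.cast_smul_eq_nsmul ℝ p (-1 : CliffordAlgebra Q)]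
    module
  | one =>
    simp only [pow_one]
    rw [hX, iota_embX_decomp]
    have hterm : ∀ i : Fin p, E i * (∑ k, x k • E k) * E i = ∑ k, x k • (E i * E k * E i) := by
      intro i
      rw [Finset.mul_sum, Finset.sum_mul]
      exact Finset.sum_congr rfl fun k _ => by
        rw [mul_smul_comm, smul_mul_assoc]
    rw [Finset.sum_congr rfl (fun i _ => hterm i), Finset.sum_comm]
    have : ∀ k : Fin p, ∑ i : Fin p, x k • (E i * E k * E i) = x k • (((p:ℝ)-2) • E k) := by
      intro k
      rw [← Finset.smul_sum, sum_E_conj_single hQ k]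
    rw [Finset.sum_congr rfl (fun k _ => this k)]
    rw [κcoef]
    simp only [Nat.not_even_one, if_false]
    rw [Finset.smul_sum]
    exact Finset.sum_congr rfl fun k _ => smul_comm _ _ _
  | more r ih _ =>
    have hc : X * X = algebraMap ℝ _ (-‖embX p q x‖^2) := iota_sq hQ _
    have hpow : X^(r+2) = X^r * algebraMap ℝ _ (-‖embX p q x‖^2) := by
      rw [pow_add, pow_two, hc]
    have hterm : ∀ i : Fin p, E i * X^(r+2) * E i
        = (E i * X^r * E i) * algebraMap ℝ _ (-‖embX p q x‖^2) := by
      intro i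
      rw [hpow, ← mul_assoc, mul_assoc (E i * X^r) _ (E i), Algebra.commutes, ← mul_assoc,
        mul_assoc]
    rw [Finset.sum_congr rfl (fun i _ => hterm i), ← Finset.sum_mul, ih, smul_mul_assoc,
      ← hpow]
    congr 1
    have : Even (r+2) ↔ Even r := by
      simp [Nat.even_add]
    simp only [κcoef, this]
end PQ2
section Main
open CliffordAlgebra Finset
variable {p q : ℕ} {Q : QuadraticForm ℝ (EuclideanSpace ℝ (Fin (p + q)))}
  {s : EuclideanSpace ℝ (Fin q)} {N : ℕ} {C D : ℕ → ℝ → ℝ}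


lemma hasPDeriv_unique {E A : Type*} [NormedAddCommGroup E] [NormedSpace ℝ E]
    [AddCommGroup A] [Module ℝ A] {f : E → A} {a v : E} {d₁ d₂ : A}
    (h₁ : HasPDeriv f a v d₁) (h₂ : HasPDeriv f a v d₂) : d₁ = d₂ := by
  rw [← sub_eq_zero, ← Module.forall_dual_apply_eq_zero_iff ℝ]
  intro ℓ
  rw [map_sub, sub_eq_zero]
  exact (h₁ ℓ).unique (h₂ ℓ)

/-- the function from the theorem -/
def bigF (p q : ℕ) (Q : QuadraticForm ℝ (EuclideanSpace ℝ (Fin (p + q))))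
    (s : EuclideanSpace ℝ (Fin q)) (N : ℕ) (C D : ℕ → ℝ → ℝ)
    (z : EuclideanSpace ℝ (Fin (p + q))) : CliffordAlgebra Q :=
  ∑ j ∈ Finset.range (N + 1),
    ι Q (embX p q (xpart p q z)) ^ j *
      (C j ⟪ypart p q z, s⟫ • (1 : CliffordAlgebra Q) +
        D j ⟪ypart p q z, s⟫ • ι Q (embY p q s))

lemma hasPDerivX (a : EuclideanSpace ℝ (Fin (p+q))) (i : Fin p) :
    HasPDeriv (bigF p q Q s N C D) a (EuclideanSpace.single (Fin.castAdd q i) 1)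
      (∑ j ∈ Finset.range (N+1),
        ec (ι Q (embX p q (xpart p q a))) (ι Q (embX p q (EuclideanSpace.single i 1))) j 1 *
          (C j ⟪ypart p q a, s⟫ • 1 + D j ⟪ypart p q a, s⟫ • ι Q (embY p q s))) := by
  intro ℓ
  set X := ι Q (embX p q (xpart p q a)) with hX
  set E := ι Q (embX p q (EuclideanSpace.single i (1:ℝ))) with hE
  set c : ℕ → CliffordAlgebra Q := fun j =>
    C j ⟪ypart p q a, s⟫ • 1 + D j ⟪ypart p q a, s⟫ • ι Q (embY p q s) with hc
  have hfun : (fun τ : ℝ => ℓ (bigF p q Q s N C D (a + τ • EuclideanSpace.single (Fin.castAdd q i) 1)))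
      = fun τ : ℝ => ∑ k ∈ Finset.range (N+2), τ^k *
          ℓ (∑ j ∈ Finset.range (N+1), ec X E j k * c j) := by
    funext τ
    have h1 : bigF p q Q s N C D (a + τ • EuclideanSpace.single (Fin.castAdd q i) 1)
        = ∑ j ∈ Finset.range (N+1), (X + τ • E)^j * c j := by
      unfold bigF
      rw [xpart_add_smul, ypart_add_smul_cast, embX_add, embX_smul, map_add, _root_.map_smul]
    rw [h1]
    have h2 : ∀ j ∈ Finset.range (N+1), (X + τ • E)^j * c j
        = ∑ k ∈ Finset.range (N+2), τ^k • (ec X E j k * c j) := by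
      intro j hj
      rw [ec_expand, Finset.sum_mul]
      have hsub : Finset.range (j+1) ⊆ Finset.range (N+2) := by
        apply Finset.range_subset_range.2
        have := Finset.mem_range.1 hj
        omega
      rw [Finset.sum_subset hsub]
      · exact Finset.sum_congr rfl fun k _ => smul_mul_assoc _ _ _
      · intro k _ hk
        rw [Finset.mem_range] at hk
        rw [ec_gt X E j k (by omega)]
        simp
    rw [Finset.sum_congr rfl h2, Finset.sum_comm]
    rw [map_sum]
    apply Finset.sum_congr rfl
    intro k _
    rw [← Finset.smul_sum, _root_.map_smul, smul_eq_mul]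
  rw [hfun]
  have hpoly := hasDerivAt_poly
    (fun k => ℓ (∑ j ∈ Finset.range (N+1), ec X E j k * c j)) (by omega : 1 < N+2)
  exact hpoly

lemma hasPDerivY (hCdiff : ∀ j, Differentiable ℝ (C j)) (hDdiff : ∀ j, Differentiable ℝ (D j))
    (a : EuclideanSpace ℝ (Fin (p+q))) (i : Fin q) :
    HasPDeriv (bigF p q Q s N C D) a (EuclideanSpace.single (Fin.natAdd p i) 1)
      (s i • ∑ j ∈ Finset.range (N+1),
        ι Q (embX p q (xpart p q a)) ^ j *
          (deriv (C j) ⟪ypart p q a, s⟫ • 1 +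
           deriv (D j) ⟪ypart p q a, s⟫ • ι Q (embY p q s))) := by
  intro ℓ
  set X := ι Q (embX p q (xpart p q a)) with hX
  set S := ι Q (embY p q s) with hS
  set t := ⟪ypart p q a, s⟫ with ht
  have hfun : (fun τ : ℝ => ℓ (bigF p q Q s N C D (a + τ • EuclideanSpace.single (Fin.natAdd p i) 1)))
      = fun τ : ℝ => ∑ j ∈ Finset.range (N+1),
          (C j (t + τ * s i) * ℓ (X^j) + D j (t + τ * s i) * ℓ (X^j * S)) := by
    funext τ
    have h1 : ⟪ypart p q (a + τ • EuclideanSpace.single (Fin.natAdd p i) 1), s⟫ = t + τ * s i := by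
      rw [ypart_add_smul_nat, inner_add_left, real_inner_smul_left,
        EuclideanSpace.inner_single_left]
      simp [ht]
    have h2 : xpart p q (a + τ • EuclideanSpace.single (Fin.natAdd p i) 1) = xpart p q a :=
      xpart_add_smul_nat a τ i
    unfold bigF
    rw [h2, h1, map_sum]
    apply Finset.sum_congr rfl
    intro j _
    rw [mul_add, mul_smul_comm, mul_smul_comm, mul_one, map_add, _root_.map_smul, _root_.map_smul,
      smul_eq_mul, smul_eq_mul]
  rw [hfun]
  have hterm : ∀ j ∈ Finset.range (N+1),
      HasDerivAt (fun τ : ℝ => C j (t + τ * s i) * ℓ (X^j) + D j (t + τ * s i) * ℓ (X^j * S))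
        (deriv (C j) t * s i * ℓ (X^j) + deriv (D j) t * s i * ℓ (X^j * S)) 0 := by
    intro j _
    have haff : HasDerivAt (fun τ : ℝ => t + τ * s i) (s i) 0 := by
      simpa using ((hasDerivAt_id (0:ℝ)).mul_const (s i)).const_add t
    have hC : HasDerivAt (fun τ : ℝ => C j (t + τ * s i)) (deriv (C j) t * s i) 0 := by
      have h0 : HasDerivAt (C j) (deriv (C j) t) (t + 0 * s i) := by
        simpa using ((hCdiff j) t).hasDerivAt
      simpa [Function.comp_def] using h0.comp 0 haff
    have hD : HasDerivAt (fun τ : ℝ => D j (t + τ * s i)) (deriv (D j) t * s i) 0 := by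
      have h0 : HasDerivAt (D j) (deriv (D j) t) (t + 0 * s i) := by
        simpa using ((hDdiff j) t).hasDerivAt
      simpa [Function.comp_def] using h0.comp 0 haff
    exact (hC.mul_const _).add (hD.mul_const _)
  have hsum := HasDerivAt.fun_sum hterm
  convert hsum using 1
  case e'_4 => rfl
  case e'_5 => rfl
  rw [_root_.map_smul, smul_eq_mul, map_sum, Finset.mul_sum]
  apply Finset.sum_congr rfl
  intro j _
  rw [mul_add, mul_smul_comm, mul_smul_comm, mul_one, map_add, _root_.map_smul, _root_.map_smul,
    smul_eq_mul, smul_eq_mul]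
  ring

end Main
section Master
open CliffordAlgebra Finset
variable {p q : ℕ} {Q : QuadraticForm ℝ (EuclideanSpace ℝ (Fin (p + q)))}
  {s : EuclideanSpace ℝ (Fin q)} {N : ℕ} {C D : ℕ → ℝ → ℝ}

lemma ec_zero_one {A : Type*} [Ring A] [Algebra ℝ A] (X E : A) : ec X E 0 1 = 0 := by
  simp [ec]

lemma xsum (hQ : ∀ v, Q v = -‖v‖^2) (hCN : ∀ j, N ≤ j → C j = 0) (hDN : ∀ j, N ≤ j → D j = 0)
    (a : EuclideanSpace ℝ (Fin (p+q))) :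
    (∑ i : Fin p, ι Q (EuclideanSpace.single (Fin.castAdd q i) (1:ℝ)) *
      (∑ j ∈ Finset.range (N+1),
        ec (ι Q (embX p q (xpart p q a))) (ι Q (embX p q (EuclideanSpace.single i 1))) j 1 *
          (C j ⟪ypart p q a, s⟫ • 1 + D j ⟪ypart p q a, s⟫ • ι Q (embY p q s))))
    = ∑ j ∈ Finset.range (N+1), βcoef p (j+1) •
        (ι Q (embX p q (xpart p q a)) ^ j *
          (C (j+1) ⟪ypart p q a, s⟫ • 1 + D (j+1) ⟪ypart p q a, s⟫ • ι Q (embY p q s))) := by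
  set X := ι Q (embX p q (xpart p q a)) with hX
  set E : Fin p → CliffordAlgebra Q := fun i => ι Q (embX p q (EuclideanSpace.single i 1)) with hE
  set t := ⟪ypart p q a, s⟫ with ht
  set c : ℕ → CliffordAlgebra Q := fun j => C j t • 1 + D j t • ι Q (embY p q s) with hc
  have hι : ∀ i : Fin p, ι Q (EuclideanSpace.single (Fin.castAdd q i) (1:ℝ)) = E i := by
    intro i; rw [hE, ← embX_single]
  calc (∑ i : Fin p, ι Q (EuclideanSpace.single (Fin.castAdd q i) (1:ℝ)) *
      (∑ j ∈ Finset.range (N+1), ec X (E i) j 1 * c j))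
      = ∑ j ∈ Finset.range (N+1), ∑ i : Fin p, E i * (ec X (E i) j 1 * c j) := by
        rw [Finset.sum_comm]
        apply Finset.sum_congr rfl
        intro i _
        rw [hι i, Finset.mul_sum]
    _ = ∑ j ∈ Finset.range N, ∑ i : Fin p, E i * (ec X (E i) (j+1) 1 * c (j+1)) := by
        rw [Finset.sum_range_succ' (fun j => ∑ i : Fin p, E i * (ec X (E i) j 1 * c j)) N]
        simp [ec_zero_one]
    _ = ∑ j ∈ Finset.range N, βcoef p (j+1) • (X^j * c (j+1)) := by
        apply Finset.sum_congr rfl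
        intro j _
        calc ∑ i : Fin p, E i * (ec X (E i) (j+1) 1 * c (j+1))
            = ∑ i : Fin p, ∑ r ∈ Finset.range (j+1),
                (E i * X^r * E i) * (X^(j-r) * c (j+1)) := by
              apply Finset.sum_congr rfl
              intro i _
              rw [ec_one, Finset.sum_mul, Finset.mul_sum]
              apply Finset.sum_congr rfl
              intro r _
              simp only [mul_assoc]
          _ = ∑ r ∈ Finset.range (j+1), (∑ i : Fin p, E i * X^r * E i) * (X^(j-r) * c (j+1)) := by
              rw [Finset.sum_comm]
              exact Finset.sum_congr rfl fun r _ => (Finset.sum_mul _ _ _).symm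
          _ = ∑ r ∈ Finset.range (j+1), κcoef p r • (X^j * c (j+1)) := by
              apply Finset.sum_congr rfl
              intro r hr
              rw [sum_E_pow_E hQ, smul_mul_assoc, ← mul_assoc, ← pow_add]
              congr 3
              have := Finset.mem_range.1 hr
              omega
          _ = βcoef p (j+1) • (X^j * c (j+1)) := by
              rw [← Finset.sum_smul, βsum]
    _ = ∑ j ∈ Finset.range (N+1), βcoef p (j+1) • (X^j * c (j+1)) := by
        rw [Finset.sum_range_succ]
        have hCz : C (N+1) t = 0 := by rw [hCN (N+1) (by omega)]; rfl
        have hDz : D (N+1) t = 0 := by rw [hDN (N+1) (by omega)]; rfl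
        rw [show c (N+1) = 0 by rw [hc]; simp [hCz, hDz]]
        rw [mul_zero, smul_zero, add_zero]

lemma ysum (hQ : ∀ v, Q v = -‖v‖^2) (hs : ‖s‖ = 1) (a : EuclideanSpace ℝ (Fin (p+q))) :
    (∑ i : Fin q, ι Q (EuclideanSpace.single (Fin.natAdd p i) (1:ℝ)) *
      (s i • ∑ j ∈ Finset.range (N+1),
        ι Q (embX p q (xpart p q a)) ^ j *
          (deriv (C j) ⟪ypart p q a, s⟫ • 1 +
           deriv (D j) ⟪ypart p q a, s⟫ • ι Q (embY p q s))))
    = ∑ j ∈ Finset.range (N+1), ((-1:ℝ)^j) •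
        (ι Q (embX p q (xpart p q a)) ^ j *
          ((-deriv (D j) ⟪ypart p q a, s⟫) • 1 +
            deriv (C j) ⟪ypart p q a, s⟫ • ι Q (embY p q s))) := by
  set X := ι Q (embX p q (xpart p q a)) with hX
  set S := ι Q (embY p q s) with hS
  set t := ⟪ypart p q a, s⟫ with ht
  set W := ∑ j ∈ Finset.range (N+1), X ^ j * (deriv (C j) t • 1 + deriv (D j) t • S) with hW
  have hSX : ⟪embY p q s, embX p q (xpart p q a)⟫ = 0 := by
    rw [real_inner_comm]; exact inner_embX_embY _ _
  have hSS : S * S = -1 := iota_sq_neg_one hQ _ (by rw [norm_embY, hs])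
  calc (∑ i : Fin q, ι Q (EuclideanSpace.single (Fin.natAdd p i) (1:ℝ)) * (s i • W))
      = (∑ i : Fin q, s i • ι Q (embY p q (EuclideanSpace.single i 1))) * W := by
        rw [Finset.sum_mul]
        apply Finset.sum_congr rfl
        intro i _
        rw [← embY_single, mul_smul_comm, smul_mul_assoc]
    _ = S * W := by rw [hS, iota_embY_decomp]
    _ = ∑ j ∈ Finset.range (N+1), S * (X^j * (deriv (C j) t • 1 + deriv (D j) t • S)) := by
        rw [hW, Finset.mul_sum]
    _ = ∑ j ∈ Finset.range (N+1), ((-1:ℝ)^j) •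
          (X^j * ((-deriv (D j) t) • 1 + deriv (C j) t • S)) := by
        apply Finset.sum_congr rfl
        intro j _
        rw [← mul_assoc, anticomm_pow hQ hSX j, smul_mul_assoc, mul_assoc]
        congr 1
        rw [mul_add, mul_smul_comm, mul_smul_comm, mul_one, hSS]
        rw [smul_neg, ← neg_smul]
        abel
        exact congrArg (fun z => X^j * z) (add_comm _ _)

end Master

section Final
open CliffordAlgebra Finset
variable {p q : ℕ} {Q : QuadraticForm ℝ (EuclideanSpace ℝ (Fin (p + q)))}
  {s : EuclideanSpace ℝ (Fin q)} {N : ℕ} {C D : ℕ → ℝ → ℝ}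

lemma diracDerivEq_bigF (hQ : ∀ v, Q v = -‖v‖^2) (hs : ‖s‖ = 1)
    (hCdiff : ∀ j, Differentiable ℝ (C j)) (hDdiff : ∀ j, Differentiable ℝ (D j))
    (hCN : ∀ j, N ≤ j → C j = 0) (hDN : ∀ j, N ≤ j → D j = 0)
    (a : EuclideanSpace ℝ (Fin (p+q))) :
    DiracDerivEq (bigF p q Q s N C D) a
      (∑ j ∈ Finset.range (N+1), ι Q (embX p q (xpart p q a)) ^ j *
        ((βcoef p (j+1) * C (j+1) ⟪ypart p q a, s⟫ - (-1:ℝ)^j * deriv (D j) ⟪ypart p q a, s⟫) • 1 +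
         (βcoef p (j+1) * D (j+1) ⟪ypart p q a, s⟫ + (-1:ℝ)^j * deriv (C j) ⟪ypart p q a, s⟫) •
           ι Q (embY p q s))) := by
  refine ⟨Fin.addCases
    (fun i => ∑ j ∈ Finset.range (N+1),
      ec (ι Q (embX p q (xpart p q a))) (ι Q (embX p q (EuclideanSpace.single i 1))) j 1 *
        (C j ⟪ypart p q a, s⟫ • 1 + D j ⟪ypart p q a, s⟫ • ι Q (embY p q s)))
    (fun i => s i • ∑ j ∈ Finset.range (N+1),
      ι Q (embX p q (xpart p q a)) ^ j *
        (deriv (C j) ⟪ypart p q a, s⟫ • 1 +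
         deriv (D j) ⟪ypart p q a, s⟫ • ι Q (embY p q s))), ?_, ?_⟩
  · intro k
    induction k using Fin.addCases with
    | left i => simp only [Fin.addCases_left]; exact hasPDerivX a i
    | right i => simp only [Fin.addCases_right]; exact hasPDerivY hCdiff hDdiff a i
  · rw [Fin.sum_univ_add]
    simp only [Fin.addCases_left, Fin.addCases_right]
    rw [xsum hQ hCN hDN a, ysum hQ hs a, ← Finset.sum_add_distrib]
    apply Finset.sum_congr rfl
    intro j _
    rw [← mul_smul_comm, ← mul_smul_comm, ← mul_add]
    congr 1
    module

lemma scalar_S_indep (hQ : ∀ v, Q v = -‖v‖^2) (hs : ‖s‖ = 1) {α γ : ℝ}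
    (h : α • (1 : CliffordAlgebra Q) + γ • ι Q (embY p q s) = 0) : α = 0 ∧ γ = 0 := by
  set S := ι Q (embY p q s) with hS
  have hSS : S * S = -1 := iota_sq_neg_one hQ _ (by rw [norm_embY, hs])
  have hSne : S ≠ 0 := by
    intro h0
    rw [h0, mul_zero] at hSS
    exact one_ne_zero (neg_eq_zero.1 hSS.symm : (1:CliffordAlgebra Q) = 0)
  have hinv := congrArg (involute (Q := Q)) h
  rw [map_add, _root_.map_smul, _root_.map_smul, map_one, involute_ι, map_zero] at hinv
  have hα : (2*α) • (1 : CliffordAlgebra Q) = 0 := by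
    have := congrArg₂ (· + ·) h hinv
    simp only [add_zero] at this
    rw [show α • (1:CliffordAlgebra Q) + γ • S + (α • (1:CliffordAlgebra Q) + γ • (-S))
        = (2*α) • (1:CliffordAlgebra Q) by module] at this
    exact this
  have hα0 : α = 0 := by
    rcases smul_eq_zero.1 hα with h' | h'
    · linarith
    · exact absurd h' one_ne_zero
  refine ⟨hα0, ?_⟩
  rw [hα0, zero_smul, zero_add] at h
  rcases smul_eq_zero.1 h with h' | h'
  · exact h'
  · exact absurd h' hSne

end Final

theorem stmt10 (p q : ℕ) (hp : 1 ≤ p) (hq : 1 ≤ q)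
    (Q : QuadraticForm ℝ (EuclideanSpace ℝ (Fin (p + q))))
    (hQ : ∀ v, Q v = -‖v‖ ^ 2)
    (s : EuclideanSpace ℝ (Fin q)) (hs : ‖s‖ = 1)
    (N : ℕ) (C D : ℕ → ℝ → ℝ)
    (hCdiff : ∀ j, Differentiable ℝ (C j)) (hDdiff : ∀ j, Differentiable ℝ (D j))
    (hCN : ∀ j, N ≤ j → C j = 0) (hDN : ∀ j, N ≤ j → D j = 0) :
    (∀ a, DiracDerivEq (fun z =>
        ∑ j ∈ Finset.range (N + 1),
          CliffordAlgebra.ι Q (embX p q (xpart p q z)) ^ j *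
            (C j ⟪ypart p q z, s⟫ • (1 : CliffordAlgebra Q) +
              D j ⟪ypart p q z, s⟫ • CliffordAlgebra.ι Q (embY p q s))) a 0)
    ↔ ∀ (j : ℕ) (t : ℝ),
        βcoef p (j + 1) * C (j + 1) t = (-1 : ℝ) ^ j * deriv (D j) t ∧
        βcoef p (j + 1) * D (j + 1) t = -((-1 : ℝ) ^ j * deriv (C j) t) := by
  have hFdef : (fun z =>
        ∑ j ∈ Finset.range (N + 1),
          CliffordAlgebra.ι Q (embX p q (xpart p q z)) ^ j *
            (C j ⟪ypart p q z, s⟫ • (1 : CliffordAlgebra Q) +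
              D j ⟪ypart p q z, s⟫ • CliffordAlgebra.ι Q (embY p q s)))
      = bigF p q Q s N C D := rfl
  rw [hFdef]
  constructor
  · intro H j t
    have key : ∀ (x : EuclideanSpace ℝ (Fin p)) (t : ℝ),
        ∑ k ∈ Finset.range (N+1), CliffordAlgebra.ι Q (embX p q x) ^ k *
          ((βcoef p (k+1) * C (k+1) t - (-1:ℝ)^k * deriv (D k) t) • 1 +
           (βcoef p (k+1) * D (k+1) t + (-1:ℝ)^k * deriv (C k) t) •
             CliffordAlgebra.ι Q (embY p q s)) = 0 := by
      intro x t
      set a := embX p q x + embY p q (t • s) with ha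
      have hxa : xpart p q a = x := xpart_emb x (t • s)
      have hya : ⟪ypart p q a, s⟫ = t := by
        rw [ypart_emb, real_inner_smul_left, real_inner_self_eq_norm_sq, hs]
        ring
      obtain ⟨d₁, hd₁, hs₁⟩ := diracDerivEq_bigF hQ hs hCdiff hDdiff hCN hDN a
      obtain ⟨d₂, hd₂, hs₂⟩ := H a
      have hdd : d₁ = d₂ := funext fun k => hasPDeriv_unique (hd₁ k) (hd₂ k)
      rw [hdd, hs₂] at hs₁
      rw [hxa, hya] at hs₁
      exact hs₁.symm
    by_cases hj : j < N + 1
    · set i0 : Fin p := ⟨0, hp⟩ with hi0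
      set ε := CliffordAlgebra.ι Q (embX p q (EuclideanSpace.single i0 1)) with hε
      set w : ℕ → CliffordAlgebra Q := fun k =>
        ((βcoef p (k+1) * C (k+1) t - (-1:ℝ)^k * deriv (D k) t) • 1 +
         (βcoef p (k+1) * D (k+1) t + (-1:ℝ)^k * deriv (C k) t) •
           CliffordAlgebra.ι Q (embY p q s)) with hw
      have hεu : IsUnit ε := iota_unit hQ _ (emb_single_norm i0)
      have hr : ∀ r : ℝ, ∑ k ∈ Finset.range (N+1), r^k • (ε^k * w k) = 0 := by
        intro r
        have hkey := key (r • EuclideanSpace.single i0 1) t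
        rw [show CliffordAlgebra.ι Q (embX p q (r • EuclideanSpace.single i0 (1:ℝ))) = r • ε by
          rw [embX_smul, _root_.map_smul]] at hkey
        simpa only [smul_pow, smul_mul_assoc] using hkey
      have hcz := coeffs_zero (fun k => ε^k * w k) hr j hj
      have hwj : w j = 0 := unit_mul_eq_zero (hεu.pow j) hcz
      obtain ⟨hα, hγ⟩ := scalar_S_indep hQ hs hwj
      constructor <;> linarith
    · have hc : C (j+1) = 0 := hCN _ (by omega)
      have hd : D (j+1) = 0 := hDN _ (by omega)
      have hc0 : C j = 0 := hCN _ (by omega)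
      have hd0 : D j = 0 := hDN _ (by omega)
      have hder0 : deriv (0:ℝ→ℝ) t = 0 := by
        rw [show (0:ℝ→ℝ) = fun _:ℝ => (0:ℝ) from rfl]
        exact deriv_const t 0
      constructor
      · rw [hc, hd0]; simp [hder0]
      · rw [hd, hc0]; simp [hder0]
  · intro H a
    have h := diracDerivEq_bigF hQ hs hCdiff hDdiff hCN hDN a
    have hz : (∑ j ∈ Finset.range (N+1), CliffordAlgebra.ι Q (embX p q (xpart p q a)) ^ j *
        ((βcoef p (j+1) * C (j+1) ⟪ypart p q a, s⟫ -
            (-1:ℝ)^j * deriv (D j) ⟪ypart p q a, s⟫) • 1 +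
         (βcoef p (j+1) * D (j+1) ⟪ypart p q a, s⟫ +
            (-1:ℝ)^j * deriv (C j) ⟪ypart p q a, s⟫) •
           CliffordAlgebra.ι Q (embY p q s))) = 0 := by
      apply Finset.sum_eq_zero
      intro j _
      obtain ⟨h1, h2⟩ := H j ⟪ypart p q a, s⟫
      rw [show βcoef p (j+1) * C (j+1) ⟪ypart p q a, s⟫ -
            (-1:ℝ)^j * deriv (D j) ⟪ypart p q a, s⟫ = 0 by linarith,
        show βcoef p (j+1) * D (j+1) ⟪ypart p q a, s⟫ +
            (-1:ℝ)^j * deriv (C j) ⟪ypart p q a, s⟫ = 0 by linarith]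
      simp
    rw [hz] at h
    exact h
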